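/- Let p be an odd prime, and let q be a prime with q ≡ 1 (mod 4) and (p/q) = −1. Then there exist infinitely many positive integers k such that 2kp + 1 = q·r for some prime r distinct from q. -/

import Mathlib

/-- If `p` is an odd prime and `q ≡ 1 (mod 4)` a prime with `p` not a quadratic residue
mod `q`, then there are infinitely many positive integers `k` with `2kp + 1 = q·r` for
some prime `r ≠ q`. -/
theorem stmt12 (p q : ℕ) (hp : p.Prime) (hpodd : p ≠ 2)
    (hq : q.Prime) (hq4 : q % 4 = 1) (hns : ¬ IsSquare ((p : ZMod q))) :
    {k : ℕ | 0 < k ∧ ∃ r : ℕ, r.Prime ∧ r ≠ q ∧ 2 * k * p + 1 = q * r}.Infinite := by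
  have hq2 : q ≠ 2 := by rintro rfl; simp at hq4
  have hqp : q ≠ p := by
    rintro rfl
    exact hns ⟨0, by simp [ZMod.natCast_self]⟩
  have hcop : Nat.Coprime q (2 * p) := by
    exact Nat.Coprime.mul_right (hq.coprime_iff_not_dvd.mpr (by
      intro h; exact hq2 ((Nat.prime_dvd_prime_iff_eq hq Nat.prime_two).mp h)))
      (hq.coprime_iff_not_dvd.mpr (by
        intro h; exact hqp ((Nat.prime_dvd_prime_iff_eq hq hp).mp h)))
  have hne : NeZero (2 * p) := ⟨Nat.mul_ne_zero two_ne_zero hp.pos.ne'⟩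
  have hunit : IsUnit ((q : ZMod (2 * p))) := (ZMod.isUnit_iff_coprime q (2 * p)).mpr hcop
  apply Set.infinite_of_forall_exists_gt
  intro n
  obtain ⟨r, hrgt, hrp, hreq⟩ :=
    Nat.forall_exists_prime_gt_and_eq_mod (a := ((q : ZMod (2 * p)))⁻¹) (IsUnit.of_mul_eq_one (q : ZMod (2 * p)) (ZMod.inv_mul_of_unit _ hunit))
      (2 * p * (n + 1) + q + 1)
  have hp0 : 0 < p := hp.pos
  have hq0 : 0 < q := hq.pos
  have hr0 : 0 < r := hrp.pos
  have h2p : 0 < 2 * p := by omega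
  have hqr1 : 1 ≤ q * r := Nat.one_le_iff_ne_zero.mpr (Nat.mul_ne_zero hq0.ne' hr0.ne')
  have hmod : q * r ≡ 1 [MOD 2 * p] := by
    have : ((q * r : ℕ) : ZMod (2 * p)) = ((1 : ℕ) : ZMod (2 * p)) := by
      push_cast
      rw [hreq, ZMod.mul_inv_of_unit _ hunit]
    exact (ZMod.natCast_eq_natCast_iff _ _ _).mp this
  have hdvd : 2 * p ∣ q * r - 1 := (Nat.modEq_iff_dvd' hqr1).mp hmod.symm
  have hlt : 2 * p * (n + 1) + q + 1 < q * r :=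
    lt_of_lt_of_le hrgt (Nat.le_mul_of_pos_left r hq.pos)
  have heq1 : 2 * p * (n + 1) = 2 * p * n + 2 * p := by ring
  refine ⟨(q * r - 1) / (2 * p), ⟨?_, r, hrp, ?_, ?_⟩, ?_⟩
  · -- positivity of k
    apply Nat.div_pos _ h2p
    omega
  · -- r ≠ q
    have hqlt : q < r := by omega
    exact hqlt.ne'
  · -- equation
    have h1 : 2 * ((q * r - 1) / (2 * p)) * p = (q * r - 1) / (2 * p) * (2 * p) := by ring
    rw [h1, Nat.div_mul_cancel hdvd]
    omega
  · -- k > n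
    calc n = 2 * p * n / (2 * p) := by rw [Nat.mul_div_cancel_left _ h2p]
    _ < (q * r - 1) / (2 * p) := by
        apply Nat.div_lt_div_of_lt_of_dvd hdvd
        have := hq.pos
        omega
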